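/- Suppose the irreducibility conditions hold: α < 1, β > 0, β+γ < 1, δ > 0, δ+φ < 1, κ < 1. Then the characteristic polynomial of A splits over ℝ, 1 is its largest real root, and when its four real roots are ordered as λ₁ ≥ λ₂ ≥ λ₃ ≥ λ₄ (with λ₁ = 1, counted with multiplicity), the second largest eigenvalue satisfies λ₂ ≥ 0. -/

import Mathlib

open Polynomial Matrix

/-- The 4×4 tridiagonal row-stochastic matrix with parameters α,β,γ,δ,φ,κ. -/
noncomputable def Amat (α β γ δ φ κ : ℝ) : Matrix (Fin 4) (Fin 4) ℝ :=
  !![α, 1-α, 0, 0;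
     β, γ, 1-β-γ, 0;
     0, δ, φ, 1-δ-φ;
     0, 0, 1-κ, κ]

section Aux

lemma my_charpoly_conj {n : Type*} [DecidableEq n] [Fintype n] (P Q M : Matrix n n ℝ)
    (h1 : P * Q = 1) (h2 : Q * P = 1) : (P * M * Q).charpoly = M.charpoly := by
  unfold Matrix.charpoly
  have hPQ : (P.map C) * (Q.map C) = 1 := by
    have := congrArg (fun (X : Matrix n n ℝ) => X.map (C : ℝ →+* ℝ[X])) h1
    simpa [Matrix.map_mul] using this
  have hQP : (Q.map C) * (P.map C) = 1 := by
    have := congrArg (fun (X : Matrix n n ℝ) => X.map (C : ℝ →+* ℝ[X])) h2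
    simpa [Matrix.map_mul] using this
  have key : charmatrix (P * M * Q) = P.map C * charmatrix M * Q.map C := by
    unfold charmatrix
    rw [mul_sub, sub_mul]
    congr 1
    · rw [mul_assoc, (Matrix.scalar_commute (X : ℝ[X]) (fun r => (Commute.all _ _)) (Q.map C)).eq,
        ← mul_assoc, hPQ, one_mul]
    · simp [Matrix.map_mul, RingHom.mapMatrix_apply, mul_assoc]
  rw [key, Matrix.det_mul, Matrix.det_mul]
  have h1' : (P.map C).det * (Q.map C).det = 1 := by
    rw [← Matrix.det_mul, hPQ, Matrix.det_one]
  calc (P.map C).det * (charmatrix M).det * (Q.map C).det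
      = ((P.map C).det * (Q.map C).det) * (charmatrix M).det := by ring
    _ = (charmatrix M).det := by rw [h1', one_mul]

lemma my_charpoly_diagonal {n : Type*} [DecidableEq n] [Fintype n] (d : n → ℝ) :
    (Matrix.diagonal d).charpoly = ∏ i, (X - C (d i)) := by
  unfold Matrix.charpoly
  have : charmatrix (Matrix.diagonal d) = Matrix.diagonal (fun i => X - C (d i)) := by
    ext i j
    by_cases h : i = j
    · subst h; simp [charmatrix_apply, Matrix.diagonal_apply]
    · simp [charmatrix_apply_ne _ _ _ h, Matrix.diagonal_apply_ne _ h]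
  rw [this, Matrix.det_diagonal]

lemma my_eval_charpoly {n : Type*} [DecidableEq n] [Fintype n] (M : Matrix n n ℝ) (t : ℝ) :
    M.charpoly.eval t = (t • (1 : Matrix n n ℝ) - M).det := by
  unfold Matrix.charpoly
  rw [show (Polynomial.eval t ((charmatrix M).det)) = ((charmatrix M).map (Polynomial.eval t)).det from ?_]
  · congr 1
    ext i j
    by_cases h : i = j
    · subst h; simp [charmatrix_apply, Matrix.diagonal_apply, Matrix.one_apply]
    · simp [charmatrix_apply_ne _ _ _ h, Matrix.one_apply_ne h]
  · have h2 := RingHom.map_det (Polynomial.evalRingHom t) (charmatrix M)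
    simp only [RingHom.mapMatrix_apply, Polynomial.coe_evalRingHom] at h2
    convert h2

lemma my_exists_eigvec {n : Type*} [DecidableEq n] [Fintype n] (M : Matrix n n ℝ) (t : ℝ)
    (h : (t • (1 : Matrix n n ℝ) - M).det = 0) :
    ∃ v : n → ℝ, v ≠ 0 ∧ M *ᵥ v = t • v := by
  obtain ⟨v, hv0, hv⟩ := (Matrix.exists_mulVec_eq_zero_iff (M := t • (1 : Matrix n n ℝ) - M)).mpr h
  refine ⟨v, hv0, ?_⟩
  rw [Matrix.sub_mulVec, Matrix.smul_mulVec, Matrix.one_mulVec] at hv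
  exact (sub_eq_zero.mp hv).symm

lemma my_eig_le_one {n : Type*} [DecidableEq n] [Fintype n] [Nonempty n] {t : ℝ}
    (M : Matrix n n ℝ) (hpos : ∀ i j, 0 ≤ M i j) (hrow : ∀ i, ∑ j, M i j = 1)
    {v : n → ℝ} (hv : v ≠ 0) (heig : M *ᵥ v = t • v) : t ≤ 1 := by
  obtain ⟨i, -, hi⟩ := Finset.exists_max_image Finset.univ (fun i => |v i|) ⟨Classical.arbitrary n, Finset.mem_univ _⟩
  have hvi : 0 < |v i| := by
    rcases Function.ne_iff.mp hv with ⟨j, hj⟩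
    exact lt_of_lt_of_le (abs_pos.mpr hj) (hi j (Finset.mem_univ j))
  have h1 : |t| * |v i| = |(M *ᵥ v) i| := by
    rw [heig]; simp [abs_mul]
  have h2 : |(M *ᵥ v) i| ≤ ∑ j, M i j * |v j| := by
    rw [Matrix.mulVec, dotProduct]
    refine (Finset.abs_sum_le_sum_abs _ _).trans ?_
    apply Finset.sum_le_sum
    intro j _
    rw [abs_mul, abs_of_nonneg (hpos i j)]
  have h3 : ∑ j, M i j * |v j| ≤ |v i| := by
    calc ∑ j, M i j * |v j| ≤ ∑ j, M i j * |v i| :=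
          Finset.sum_le_sum fun j _ => mul_le_mul_of_nonneg_left (hi j (Finset.mem_univ j)) (hpos i j)
      _ = |v i| := by rw [← Finset.sum_mul, hrow, one_mul]
  have ht : |t| ≤ 1 := by
    by_contra hc
    push_neg at hc
    nlinarith [h1, h2, h3]
  calc t ≤ |t| := le_abs_self t
    _ ≤ 1 := ht

lemma my_sort3 (a b c : ℝ) : ∃ x y z : ℝ, ({a, b, c} : Multiset ℝ) = {x, y, z} ∧ y ≤ x ∧ z ≤ y := by
  have swap12 : ∀ p q r : ℝ, ({p, q, r} : Multiset ℝ) = {q, p, r} := by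
    intro p q r
    show p ::ₘ q ::ₘ {r} = q ::ₘ p ::ₘ {r}
    exact Multiset.cons_swap p q {r}
  have swap23 : ∀ p q r : ℝ, ({p, q, r} : Multiset ℝ) = {p, r, q} := by
    intro p q r
    show p ::ₘ q ::ₘ r ::ₘ 0 = p ::ₘ r ::ₘ q ::ₘ 0
    exact congrArg (p ::ₘ ·) (Multiset.cons_swap q r 0)
  rcases le_total a b with h1 | h1 <;> rcases le_total b c with h2 | h2 <;> rcases le_total a c with h3 | h3
  · exact ⟨c, b, a, by rw [swap12, swap23, swap12], h2, h1⟩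
  · exact ⟨c, b, a, by rw [swap12, swap23, swap12], h2, h1⟩
  · exact ⟨b, c, a, by rw [swap12, swap23], h2, h3⟩
  · exact ⟨b, a, c, swap12 _ _ _, h1, h3⟩
  · exact ⟨c, a, b, by rw [swap23, swap12], h3, h1⟩
  · exact ⟨a, c, b, swap23 _ _ _, h3, h2⟩
  · exact ⟨a, c, b, swap23 _ _ _, le_trans h2 h1, le_trans h1 h3⟩
  · exact ⟨a, b, c, rfl, h1, h2⟩

lemma my_split4 (f : Fin 4 → ℝ) (i₀ : Fin 4) :
    ∃ j₁ j₂ j₃ : Fin 4, j₁ ≠ i₀ ∧ j₂ ≠ i₀ ∧ j₃ ≠ i₀ ∧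
      (∀ j : Fin 4, j = i₀ ∨ j = j₁ ∨ j = j₂ ∨ j = j₃) ∧
      ({f 0, f 1, f 2, f 3} : Multiset ℝ) = {f i₀, f j₁, f j₂, f j₃} := by
  fin_cases i₀
  · exact ⟨1, 2, 3, by decide, by decide, by decide, by decide, rfl⟩
  · refine ⟨0, 2, 3, by decide, by decide, by decide, by decide, ?_⟩
    exact Multiset.cons_swap (f 0) (f 1) {f 2, f 3}
  · refine ⟨0, 1, 3, by decide, by decide, by decide, by decide, ?_⟩
    rw [show ({f 0, f 1, f 2, f 3} : Multiset ℝ) = f 0 ::ₘ (f 1 ::ₘ f 2 ::ₘ {f 3}) from rfl,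
      Multiset.cons_swap (f 1) (f 2) {f 3}, Multiset.cons_swap (f 0) (f 2) (f 1 ::ₘ {f 3})]
    rfl
  · refine ⟨0, 1, 2, by decide, by decide, by decide, by decide, ?_⟩
    rw [show ({f 0, f 1, f 2, f 3} : Multiset ℝ) = f 0 ::ₘ f 1 ::ₘ (f 2 ::ₘ f 3 ::ₘ 0) from rfl,
      Multiset.cons_swap (f 2) (f 3) 0, Multiset.cons_swap (f 1) (f 3) (f 2 ::ₘ 0),
      Multiset.cons_swap (f 0) (f 3) (f 1 ::ₘ f 2 ::ₘ 0)]
    rfl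

lemma my_spectral_real {n : Type*} [DecidableEq n] [Fintype n] (S : Matrix n n ℝ) (hS : S.IsHermitian) :
    S = (hS.eigenvectorUnitary : Matrix n n ℝ) * Matrix.diagonal hS.eigenvalues
      * star (hS.eigenvectorUnitary : Matrix n n ℝ) := by
  have h := hS.spectral_theorem
  rw [Unitary.conjStarAlgAut_apply] at h
  exact h

lemma my_not_three_neg (S : Matrix (Fin 4) (Fin 4) ℝ) (hS : S.IsHermitian)
    (h00 : 0 ≤ S 0 0) (h33 : 0 ≤ S 3 3) (h03 : S 0 3 = 0) (h30 : S 3 0 = 0)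
    (j₀ : Fin 4) (hneg : ∀ j, j ≠ j₀ → hS.eigenvalues j < 0) : False := by
  set U : Matrix (Fin 4) (Fin 4) ℝ := (hS.eigenvectorUnitary : Matrix (Fin 4) (Fin 4) ℝ) with hUdef
  set μ : Fin 4 → ℝ := hS.eigenvalues with hμdef
  have hspec : S = U * Matrix.diagonal μ * star U := my_spectral_real S hS
  have hUW : U * star U = 1 := (Matrix.mem_unitaryGroup_iff).mp hS.eigenvectorUnitary.2
  obtain ⟨x, w, hxw, horth⟩ : ∃ x w : ℝ, ¬(x = 0 ∧ w = 0) ∧ x * U 0 j₀ + w * U 3 j₀ = 0 := by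
    by_cases h0 : U 0 j₀ = 0
    · exact ⟨1, 0, by simp, by simp [h0]⟩
    · exact ⟨U 3 j₀, -(U 0 j₀), fun h => h0 (by linarith [h.2]), by ring⟩
  set v : Fin 4 → ℝ := ![x, 0, 0, w] with hvdef
  set c : Fin 4 → ℝ := star U *ᵥ v with hcdef
  have hcj : c j₀ = 0 := by
    have : c j₀ = U 0 j₀ * x + U 3 j₀ * w := by
      simp [hcdef, Matrix.mulVec, dotProduct, Fin.sum_univ_four, Matrix.star_apply, hvdef]
    rw [this]; linarith [horth]
  have hvc : v ᵥ* U = c := by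
    ext i
    simp [hcdef, Matrix.vecMul, Matrix.mulVec, dotProduct, Matrix.star_apply, mul_comm]
  have hform : v ⬝ᵥ (S *ᵥ v) = ∑ i, μ i * (c i)^2 := by
    rw [hspec, ← Matrix.mulVec_mulVec, ← Matrix.mulVec_mulVec, Matrix.dotProduct_mulVec, hvc]
    simp [dotProduct, Matrix.mulVec_diagonal]
    apply Finset.sum_congr rfl
    intro i _
    ring
  have hcc : c ⬝ᵥ c = v ⬝ᵥ v := by
    calc c ⬝ᵥ c = (v ᵥ* U) ⬝ᵥ (star U *ᵥ v) := by rw [hvc]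
      _ = v ⬝ᵥ (U *ᵥ (star U *ᵥ v)) := (Matrix.dotProduct_mulVec _ _ _).symm
      _ = v ⬝ᵥ ((U * star U) *ᵥ v) := by rw [Matrix.mulVec_mulVec]
      _ = v ⬝ᵥ v := by rw [hUW, Matrix.one_mulVec]
  have hnn : 0 ≤ v ⬝ᵥ (S *ᵥ v) := by
    have : v ⬝ᵥ (S *ᵥ v) = S 0 0 * x^2 + S 3 3 * w^2 := by
      simp [dotProduct, Matrix.mulVec, Fin.sum_univ_four, hvdef, h03, h30]
      ring
    rw [this]
    positivity
  have hvv : 0 < v ⬝ᵥ v := by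
    have : v ⬝ᵥ v = x^2 + w^2 := by
      simp [dotProduct, Fin.sum_univ_four, hvdef]; ring
    rw [this]
    rcases not_and_or.mp hxw with h | h
    · positivity
    · positivity
  obtain ⟨k, hk⟩ : ∃ k, c k ≠ 0 := by
    by_contra hc
    push_neg at hc
    have : c ⬝ᵥ c = 0 := by simp [dotProduct, hc]
    rw [hcc] at this; linarith
  have hkj : k ≠ j₀ := fun h => hk (h ▸ hcj)
  have hlt : ∑ i, μ i * (c i)^2 < 0 := by
    have hle : ∀ i ∈ Finset.univ, μ i * (c i)^2 ≤ (fun _ => (0:ℝ)) i := by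
      intro i _
      by_cases hij : i = j₀
      · subst hij; rw [hcj]; simp
      · show μ i * (c i)^2 ≤ 0
        have := hneg i hij
        nlinarith [sq_nonneg (c i)]
    have hstrict : ∃ i ∈ Finset.univ, μ i * (c i)^2 < (fun _ => (0:ℝ)) i := by
      refine ⟨k, Finset.mem_univ k, ?_⟩
      have h1 := hneg k hkj
      have h2 : 0 < (c k)^2 := by positivity
      show μ k * (c k)^2 < 0
      nlinarith
    have := Finset.sum_lt_sum hle hstrict
    simpa using this
  rw [hform] at hnn
  linarith


lemma my_herm (α β γ δ φ κ : ℝ) (e : Fin 4 → ℝ) (hene : ∀ i, e i ≠ 0)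
    (h1 : (1-α) * (e 1)^2 = β * (e 0)^2)
    (h2 : (1-β-γ) * (e 2)^2 = δ * (e 1)^2)
    (h3 : (1-δ-φ) * (e 3)^2 = (1-κ) * (e 2)^2) :
    (Matrix.diagonal (fun i => (e i)⁻¹) * Amat α β γ δ φ κ * Matrix.diagonal e).IsHermitian := by
  have hApp : ∀ i j, (Matrix.diagonal (fun i => (e i)⁻¹) * Amat α β γ δ φ κ * Matrix.diagonal e) i j
      = (e i)⁻¹ * Amat α β γ δ φ κ i j * e j := by
    intro i j
    rw [Matrix.mul_diagonal, Matrix.diagonal_mul]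
  show _ᴴ = _
  ext i j
  rw [Matrix.conjTranspose_apply, star_trivial, hApp, hApp]
  have e0 := hene 0; have e1 := hene 1; have e2 := hene 2; have e3 := hene 3
  fin_cases i <;> fin_cases j <;>
    simp [Amat, Matrix.vecHead, Matrix.vecTail, Function.comp] <;>
    field_simp <;> nlinarith [h1, h2, h3]

end Aux

set_option maxHeartbeats 2000000 in
theorem stmt_11 (α β γ δ φ κ : ℝ)
    (hα : 0 ≤ α) (hα1 : α ≤ 1) (hβ : 0 ≤ β) (hβ1 : β ≤ 1)
    (hγ : 0 ≤ γ) (hγ1 : γ ≤ 1) (hδ : 0 ≤ δ) (hδ1 : δ ≤ 1)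
    (hφ : 0 ≤ φ) (hφ1 : φ ≤ 1) (hκ : 0 ≤ κ) (hκ1 : κ ≤ 1)
    (hβγ : β + γ ≤ 1) (hδφ : δ + φ ≤ 1)
    (irr1 : α < 1) (irr2 : 0 < β) (irr3 : β + γ < 1)
    (irr4 : 0 < δ) (irr5 : δ + φ < 1) (irr6 : κ < 1) :
    Polynomial.Splits (Matrix.charpoly (Amat α β γ δ φ κ)) ∧
    ∃ l2 l3 l4 : ℝ,
      (Matrix.charpoly (Amat α β γ δ φ κ)).roots = {1, l2, l3, l4} ∧
      l2 ≤ 1 ∧ l3 ≤ l2 ∧ l4 ≤ l3 ∧ 0 ≤ l2 := by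
  have hα1' : 0 < 1 - α := by linarith
  have hβγ' : 0 < 1 - β - γ := by linarith
  have hδφ' : 0 < 1 - δ - φ := by linarith
  have hκ' : 0 < 1 - κ := by linarith
  set s2 := Real.sqrt (β / (1 - α)) with hs2def
  set t3 := Real.sqrt (δ / (1 - β - γ)) with ht3def
  set t4 := Real.sqrt ((1 - κ) / (1 - δ - φ)) with ht4def
  have hs2 : 0 < s2 := Real.sqrt_pos.mpr (div_pos irr2 hα1')
  have ht3 : 0 < t3 := Real.sqrt_pos.mpr (div_pos irr4 hβγ')
  have ht4 : 0 < t4 := Real.sqrt_pos.mpr (div_pos hκ' hδφ')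
  have hs2sq : s2 ^ 2 * (1 - α) = β := by
    rw [hs2def, Real.sq_sqrt (le_of_lt (div_pos irr2 hα1'))]
    field_simp
  have ht3sq : t3 ^ 2 * (1 - β - γ) = δ := by
    rw [ht3def, Real.sq_sqrt (le_of_lt (div_pos irr4 hβγ'))]
    field_simp
  have ht4sq : t4 ^ 2 * (1 - δ - φ) = 1 - κ := by
    rw [ht4def, Real.sq_sqrt (le_of_lt (div_pos hκ' hδφ'))]
    field_simp
  set e : Fin 4 → ℝ := ![1, s2, s2 * t3, s2 * t3 * t4] with hedef
  have hepos : ∀ i, 0 < e i := by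
    intro i
    fin_cases i <;> simp [hedef] <;> positivity
  have hene : ∀ i, e i ≠ 0 := fun i => ne_of_gt (hepos i)
  set A := Amat α β γ δ φ κ with hAdef
  set E : Matrix (Fin 4) (Fin 4) ℝ := Matrix.diagonal e with hEdef
  set E' : Matrix (Fin 4) (Fin 4) ℝ := Matrix.diagonal (fun i => (e i)⁻¹) with hE'def
  have hEE' : E * E' = 1 := by
    rw [hEdef, hE'def, Matrix.diagonal_mul_diagonal]
    rw [show (fun i => e i * (e i)⁻¹) = fun _ => (1:ℝ) from funext fun i => mul_inv_cancel₀ (hene i)]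
    exact Matrix.diagonal_one
  have hE'E : E' * E = 1 := by
    rw [hEdef, hE'def, Matrix.diagonal_mul_diagonal]
    rw [show (fun i => (e i)⁻¹ * e i) = fun _ => (1:ℝ) from funext fun i => inv_mul_cancel₀ (hene i)]
    exact Matrix.diagonal_one
  set S : Matrix (Fin 4) (Fin 4) ℝ := E' * A * E with hSdef
  have hSapp : ∀ i j, S i j = (e i)⁻¹ * A i j * e j := by
    intro i j
    rw [hSdef, Matrix.mul_diagonal, Matrix.diagonal_mul]
  have hAS : A = E * S * E' := by
    rw [hSdef]
    calc A = (E * E') * A * (E * E') := by rw [hEE']; simp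
      _ = E * (E' * A * E) * E' := by noncomm_ring
  have hchar : A.charpoly = S.charpoly := by
    rw [hAS]
    exact my_charpoly_conj E E' S hEE' hE'E
  have he0 : e 0 = 1 := by simp [hedef]
  have he1 : e 1 = s2 := by simp [hedef]
  have he2 : e 2 = s2 * t3 := by simp [hedef]
  have he3 : e 3 = s2 * t3 * t4 := by simp [hedef]
  have hS : S.IsHermitian := by
    rw [hSdef, hE'def, hEdef, hAdef]
    apply my_herm α β γ δ φ κ e hene
    · rw [he1, he0]; nlinarith [hs2sq]
    · rw [he2, he1]; nlinarith [ht3sq, sq_nonneg s2]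
    · rw [he3, he2]; nlinarith [ht4sq, sq_nonneg (s2*t3)]
  set U : Matrix (Fin 4) (Fin 4) ℝ := (hS.eigenvectorUnitary : Matrix (Fin 4) (Fin 4) ℝ) with hUdef
  set μ : Fin 4 → ℝ := hS.eigenvalues with hμdef
  have hUW : U * star U = 1 := (Matrix.mem_unitaryGroup_iff).mp hS.eigenvectorUnitary.2
  have hWU : star U * U = 1 := (Matrix.mem_unitaryGroup_iff').mp hS.eigenvectorUnitary.2
  have hcharS : S.charpoly = ∏ i, (X - C (μ i)) := by
    calc S.charpoly = (U * Matrix.diagonal μ * star U).charpoly := by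
          rw [← my_spectral_real S hS]
      _ = (Matrix.diagonal μ).charpoly := my_charpoly_conj _ _ _ hUW hWU
      _ = ∏ i, (X - C (μ i)) := my_charpoly_diagonal μ
  have hcharA : A.charpoly = ∏ i, (X - C (μ i)) := hchar.trans hcharS
  have hpos : ∀ i j, 0 ≤ A i j := by
    intro i j
    rw [hAdef]
    fin_cases i <;> fin_cases j <;>
      simp [Amat, Matrix.vecHead, Matrix.vecTail, Function.comp] <;> linarith
  have hrow : ∀ i, ∑ j, A i j = 1 := by
    intro i
    rw [hAdef]
    fin_cases i <;>
      simp [Fin.sum_univ_four, Amat, Matrix.vecHead, Matrix.vecTail, Function.comp] <;> ring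
  have hle1 : ∀ i, μ i ≤ 1 := by
    intro i
    have hroot : A.charpoly.eval (μ i) = 0 := by
      rw [hcharA, Polynomial.eval_prod]
      exact Finset.prod_eq_zero (Finset.mem_univ i) (by simp)
    rw [my_eval_charpoly] at hroot
    obtain ⟨v, hv0, hv⟩ := my_exists_eigvec A (μ i) hroot
    exact my_eig_le_one A hpos hrow hv0 hv
  have hone : ∃ i₀, μ i₀ = 1 := by
    have hdet : ((1:ℝ) • (1 : Matrix (Fin 4) (Fin 4) ℝ) - A).det = 0 := by
      refine (Matrix.exists_mulVec_eq_zero_iff).mp ⟨fun _ => 1, ?_, ?_⟩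
      · intro h
        have := congrFun h 0
        simp at this
      · ext i
        rw [hAdef]
        fin_cases i <;>
          simp [Matrix.sub_mulVec, Matrix.mulVec, dotProduct, Fin.sum_univ_four, Amat,
            Matrix.vecHead, Matrix.vecTail, Function.comp, Matrix.one_apply] <;> ring
    have heval : A.charpoly.eval 1 = 0 := by rw [my_eval_charpoly]; exact hdet
    rw [hcharA, Polynomial.eval_prod] at heval
    obtain ⟨i, -, hi⟩ := Finset.prod_eq_zero_iff.mp heval
    simp at hi
    exact ⟨i, by linarith [hi]⟩
  obtain ⟨i₀, hi₀⟩ := hone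
  have hroots : A.charpoly.roots = {μ 0, μ 1, μ 2, μ 3} := by
    rw [hcharA]
    have h4 : (∏ i : Fin 4, (X - C (μ i)))
        = (X - C (μ 0)) * ((X - C (μ 1)) * ((X - C (μ 2)) * (X - C (μ 3)))) := by
      rw [Fin.prod_univ_four]; ring
    have hne : ∀ a : ℝ, (X - C a) ≠ (0 : ℝ[X]) := fun a => Polynomial.X_sub_C_ne_zero a
    rw [h4, Polynomial.roots_mul (mul_ne_zero (hne _) (mul_ne_zero (hne _) (mul_ne_zero (hne _) (hne _)))),
      Polynomial.roots_mul (mul_ne_zero (hne _) (mul_ne_zero (hne _) (hne _))),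
      Polynomial.roots_mul (mul_ne_zero (hne _) (hne _)),
      Polynomial.roots_X_sub_C, Polynomial.roots_X_sub_C, Polynomial.roots_X_sub_C,
      Polynomial.roots_X_sub_C]
    rfl
  obtain ⟨j₁, j₂, j₃, hj1, hj2, hj3, hcover, hperm⟩ := my_split4 μ i₀
  obtain ⟨l2, l3, l4, hsort, h32, h43⟩ := my_sort3 (μ j₁) (μ j₂) (μ j₃)
  have hroots' : A.charpoly.roots = {(1:ℝ), l2, l3, l4} := by
    rw [hroots, hperm, hi₀]
    show (1:ℝ) ::ₘ ({μ j₁, μ j₂, μ j₃} : Multiset ℝ) = (1:ℝ) ::ₘ ({l2, l3, l4} : Multiset ℝ)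
    rw [hsort]
  have hmem : ∀ y, y ∈ ({l2, l3, l4} : Multiset ℝ) → ∃ j, j ≠ i₀ ∧ y = μ j := by
    intro y hy
    rw [← hsort] at hy
    rcases Multiset.mem_cons.mp hy with h | hy2
    · exact ⟨j₁, hj1, h⟩
    rcases Multiset.mem_cons.mp hy2 with h | hy3
    · exact ⟨j₂, hj2, h⟩
    · exact ⟨j₃, hj3, Multiset.mem_singleton.mp hy3⟩
  have hl2le : l2 ≤ 1 := by
    obtain ⟨j, -, hj⟩ := hmem l2 (Multiset.mem_cons_self _ _)
    rw [hj]; exact hle1 j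
  have hS00 : 0 ≤ S 0 0 := by
    rw [hSapp 0 0, hAdef]
    have : Amat α β γ δ φ κ 0 0 = α := by
      simp [Amat, Matrix.vecHead, Matrix.vecTail, Function.comp]
    rw [this, he0]
    simp [hα]
  have hS33 : 0 ≤ S 3 3 := by
    rw [hSapp 3 3, hAdef]
    have : Amat α β γ δ φ κ 3 3 = κ := by
      simp [Amat, Matrix.vecHead, Matrix.vecTail, Function.comp]
    rw [this]
    have := hepos 3
    positivity
  have hS03 : S 0 3 = 0 := by
    rw [hSapp 0 3, hAdef]
    have : Amat α β γ δ φ κ 0 3 = 0 := by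
      simp [Amat, Matrix.vecHead, Matrix.vecTail, Function.comp]
    rw [this]; ring
  have hS30 : S 3 0 = 0 := by
    rw [hSapp 3 0, hAdef]
    have : Amat α β γ δ φ κ 3 0 = 0 := by
      simp [Amat, Matrix.vecHead, Matrix.vecTail, Function.comp]
    rw [this]; ring
  have hl2nn : 0 ≤ l2 := by
    by_contra hc
    push_neg at hc
    have hneg : ∀ j, j ≠ i₀ → μ j < 0 := by
      intro j hj
      have hmem2 : μ j ∈ ({l2, l3, l4} : Multiset ℝ) := by
        rw [← hsort]
        rcases hcover j with h | h | h | h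
        · exact absurd h hj
        · rw [h]; exact Multiset.mem_cons_self _ _
        · rw [h]; exact Multiset.mem_cons_of_mem (Multiset.mem_cons_self _ _)
        · rw [h]
          exact Multiset.mem_cons_of_mem (Multiset.mem_cons_of_mem (Multiset.mem_singleton_self _))
      rcases Multiset.mem_cons.mp hmem2 with h | hy2
      · linarith [h.le]
      rcases Multiset.mem_cons.mp hy2 with h | hy3
      · have := h ▸ h32; linarith
      · have h' := Multiset.mem_singleton.mp hy3
        have := h' ▸ (le_trans h43 h32)
        linarith
    exact my_not_three_neg S hS hS00 hS33 hS03 hS30 i₀ hneg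
  constructor
  · rw [hcharA]
    exact Polynomial.Splits.prod (fun i _ => Polynomial.Splits.X_sub_C _)
  · exact ⟨l2, l3, l4, hroots', hl2le, h32, h43, hl2nn⟩
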